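/- Let G be a finite group, S ⊆ G, and σ an anti-automorphism of G. The twisted Cayley graph C(G,S)^σ is undirected if and only if σ²(g)·σ(s⁻¹)·g⁻¹ ∈ S for every s ∈ S and every g ∈ G. -/

import Mathlib

/-- Let `G` be a finite group, `S ⊆ G`, and `σ` an anti-automorphism of `G`
(a bijection with `σ(xy) = σ(y)σ(x)`). The twisted Cayley graph `C(G,S)^σ` (with an edge from
`x` to `y` whenever `y = σ(xs)` for some `s ∈ S`) is undirected if and only if
`σ²(g)·σ(s⁻¹)·g⁻¹ ∈ S` for every `s ∈ S`, `g ∈ G`. -/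
theorem stmt_9 {G : Type*} [Group G] [Fintype G]
    (S : Set G) (σ : G → G)
    (hbij : Function.Bijective σ)
    (hanti : ∀ x y : G, σ (x * y) = σ y * σ x) :
    (∀ x y : G, (∃ s ∈ S, y = σ (x * s)) → ∃ s ∈ S, x = σ (y * s)) ↔
      (∀ s ∈ S, ∀ g : G, σ (σ g) * σ s⁻¹ * g⁻¹ ∈ S) := by
  have hone : σ 1 = 1 := by
    have := hanti 1 1
    simp only [mul_one] at this
    exact right_eq_mul.mp this
  have hinv : ∀ a : G, σ a⁻¹ = (σ a)⁻¹ := by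
    intro a
    have h1 : σ a * σ a⁻¹ = 1 := by rw [← hanti a⁻¹ a, inv_mul_cancel, hone]
    exact (inv_eq_of_mul_eq_one_right h1).symm
  constructor
  · intro h s hs g
    obtain ⟨t, ht, hxt⟩ := h ((σ g)⁻¹) (σ ((σ g)⁻¹ * s)) ⟨s, hs, rfl⟩
    simp only [hanti, hinv] at hxt
    have key : t = σ (σ g) * σ s⁻¹ * g⁻¹ := by
      apply hbij.injective
      simp only [hanti, hinv]
      rw [hxt]
      group
    exact key ▸ ht
  · intro h x y hxy
    obtain ⟨s, hs, rfl⟩ := hxy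
    obtain ⟨g, hσg⟩ := hbij.surjective x⁻¹
    refine ⟨σ (σ g) * σ s⁻¹ * g⁻¹, h s hs g, ?_⟩
    simp only [hanti, hinv, hσg, inv_inv]
    group
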